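/- Let R be a UFD and I an ideal with R/I ≅ ℤ[x]/(2, x²+x) via f. If an element a ∈ R is congruent to f⁻¹(x) modulo I and all its prime factors are congruent to f⁻¹(1) or f⁻¹(x) modulo I, with exactly l prime factors congruent to f⁻¹(x), then every τ_I-factorization of a into τ_I-atoms has length exactly l. -/

import Mathlib

open Polynomial
open scoped ENNReal

variable {R : Type*} [CommRing R]

/-- `a = λ b₁ ⋯ b_k` with `λ` a unit, `k ≥ 1`, and all `bᵢ` pairwise congruent mod `I`. -/
def IsTauFactorization (I : Ideal R) (a : R) (L : List R) : Prop :=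
  L ≠ [] ∧ (∃ u : R, IsUnit u ∧ a = u * L.prod) ∧
    ∀ b ∈ L, ∀ c ∈ L, Ideal.Quotient.mk I b = Ideal.Quotient.mk I c

/-- A `τ_I`-atom: a nonzero nonunit whose only `τ_I`-factorizations have length one. -/
def IsTauAtom (I : Ideal R) (a : R) : Prop :=
  a ≠ 0 ∧ ¬ IsUnit a ∧ ∀ L : List R, IsTauFactorization I a L → L.length = 1

/-- A `τ_I`-factorization into `τ_I`-atoms. -/
def IsTauAtomicFactorization (I : Ideal R) (a : R) (L : List R) : Prop :=
  IsTauFactorization I a L ∧ ∀ b ∈ L, IsTauAtom I b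

/-- An element is `τ_I`-atomic if it has a `τ_I`-factorization into `τ_I`-atoms. -/
def IsTauAtomic (I : Ideal R) (a : R) : Prop :=
  ∃ L : List R, IsTauAtomicFactorization I a L

/-- The `τ_I`-elasticity of an element: `sup{k/l}` over pairs of atomic `τ_I`-factorizations. -/
noncomputable def tauElasticity (I : Ideal R) (a : R) : ℝ≥0∞ :=
  sSup {r : ℝ≥0∞ | ∃ L₁ L₂ : List R, IsTauAtomicFactorization I a L₁ ∧
    IsTauAtomicFactorization I a L₂ ∧
    r = (L₁.length : ℝ≥0∞) / (L₂.length : ℝ≥0∞)}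

/-- The `τ_I`-elasticity of the ring: the supremum over `τ_I`-atomic elements. -/
noncomputable def tauRingElasticity (I : Ideal R) : ℝ≥0∞ :=
  ⨆ a ∈ {a : R | IsTauAtomic I a}, tauElasticity I a

noncomputable section TauAux

abbrev tauJ : Ideal ℤ[X] := Ideal.span ({2, X ^ 2 + X} : Set ℤ[X])
abbrev tauS := ℤ[X] ⧸ tauJ
noncomputable def tauX : tauS := Ideal.Quotient.mk tauJ X

noncomputable def tauG : ℤ[X] →+* ZMod 2 × ZMod 2 :=
  RingHom.prod ((Polynomial.evalRingHom 0).comp (Polynomial.mapRingHom (Int.castRingHom (ZMod 2))))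
    ((Polynomial.evalRingHom 1).comp (Polynomial.mapRingHom (Int.castRingHom (ZMod 2))))

lemma tauG_span : ∀ p ∈ tauJ, tauG p = 0 := by
  intro p hp
  rw [Ideal.mem_span_pair] at hp
  obtain ⟨u, v, rfl⟩ := hp
  have h2 : tauG 2 = 0 := by
    simp [tauG, Prod.ext_iff]; decide
  have hx : tauG (X ^ 2 + X) = 0 := by
    simp [tauG, Prod.ext_iff]; decide
  rw [map_add, map_mul, map_mul, h2, hx]; ring

noncomputable def tauGbar : tauS →+* ZMod 2 × ZMod 2 :=
  Ideal.Quotient.lift tauJ tauG tauG_span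

lemma tauGbar_mk (p : ℤ[X]) : tauGbar (Ideal.Quotient.mk tauJ p) = tauG p :=
  Ideal.Quotient.lift_mk _ _ _

lemma tauGbar_x : tauGbar tauX = (0, 1) := by
  rw [tauX, tauGbar_mk]; simp [tauG]

lemma tauX_ne_zero : tauX ≠ 0 := by
  intro h
  have := congrArg tauGbar h
  rw [tauGbar_x, map_zero] at this
  exact absurd this (by decide)

lemma tauX_ne_one : tauX ≠ 1 := by
  intro h
  have := congrArg tauGbar h
  rw [tauGbar_x, map_one] at this
  exact absurd this (by decide)

lemma tau_one_add_x_ne_zero : 1 + tauX ≠ 0 := by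
  intro h
  have := congrArg tauGbar h
  rw [map_add, tauGbar_x, map_one, map_zero] at this
  exact absurd this (by decide)

lemma tau_two_eq_zero : (2 : tauS) = 0 := by
  have : ((2 : ℤ[X]) : tauS) = 0 := by
    rw [Ideal.Quotient.eq_zero_iff_mem]
    exact Ideal.subset_span (by simp)
  exact (map_ofNat (Ideal.Quotient.mk tauJ) 2).symm.trans this

lemma tauX_idem : tauX * tauX = tauX := by
  rw [tauX, ← map_mul, Ideal.Quotient.eq]
  rw [Ideal.mem_span_pair]
  exact ⟨-X, 1, by ring⟩

lemma tauX_add_self : tauX + tauX = 0 := by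
  have : tauX + tauX = 2 * tauX := by ring
  rw [this, tau_two_eq_zero, zero_mul]

end TauAux

section TauAux2
open Polynomial

lemma tau_monic : Monic (X ^ 2 + X : ℤ[X]) :=
  monic_X_pow_add (by rw [degree_X]; decide)

lemma tau_intCast (n : ℤ) : (n : tauS) = ((n % 2 : ℤ) : tauS) := by
  conv_lhs => rw [← Int.mul_ediv_add_emod n 2]
  push_cast
  rw [tau_two_eq_zero]
  ring

lemma tau_classify (s : tauS) : s = 0 ∨ s = 1 ∨ s = tauX ∨ s = 1 + tauX := by
  obtain ⟨p, rfl⟩ := Ideal.Quotient.mk_surjective s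
  set r := p %ₘ (X ^ 2 + X) with hr
  have h1 : Ideal.Quotient.mk tauJ p = Ideal.Quotient.mk tauJ r := by
    rw [Ideal.Quotient.eq]
    have := modByMonic_add_div p (X ^ 2 + X)
    have h2 : p - r = (X ^ 2 + X) * (p /ₘ (X ^ 2 + X)) := by
      rw [hr]; linear_combination -this
    rw [h2]
    exact Ideal.mul_mem_right _ _ (Ideal.subset_span (by simp))
  have hdeg : r.degree ≤ 1 := by
    have h3 := degree_modByMonic_lt p tau_monic
    have h4 : (X ^ 2 + X : ℤ[X]).degree = 2 := by compute_degree!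
    rw [h4] at h3
    exact Order.le_of_lt_succ (by exact_mod_cast h3)
  have h5 : r = C (r.coeff 1) * X + C (r.coeff 0) := eq_X_add_C_of_degree_le_one hdeg
  rw [h1, h5]
  set a := r.coeff 1
  set b := r.coeff 0
  have hca : ∀ n : ℤ, Ideal.Quotient.mk tauJ (C n) = (n : tauS) := by
    intro n
    rw [← map_intCast (Ideal.Quotient.mk tauJ) n]
    norm_cast
  have key : Ideal.Quotient.mk tauJ (C a * X + C b) = (a : tauS) * tauX + (b : tauS) := by
    rw [map_add, map_mul, hca, hca, tauX]
  rw [key, tau_intCast a, tau_intCast b]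
  rcases Int.emod_two_eq a with h | h <;> rcases Int.emod_two_eq b with h' | h' <;>
    rw [h, h'] <;> simp [add_comm] <;> tauto

lemma tau_units (s : tauS) (h : IsUnit s) : s = 1 := by
  have : Nontrivial tauS := ⟨⟨tauX, 0, tauX_ne_zero⟩⟩
  obtain ⟨t, ht⟩ := isUnit_iff_exists_inv.mp h
  rcases tau_classify s with rfl | rfl | rfl | rfl
  · exact absurd ht (by simp)
  · rfl
  · exfalso
    apply tau_one_add_x_ne_zero
    have h1 : (1 + tauX) * tauX = 0 := by
      rw [add_mul, one_mul, tauX_idem, tauX_add_self]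
    calc 1 + tauX = (1 + tauX) * (tauX * t) := by rw [ht, mul_one]
      _ = ((1 + tauX) * tauX) * t := by ring
      _ = 0 := by rw [h1, zero_mul]
  · exfalso
    apply tauX_ne_zero
    have h1 : tauX * (1 + tauX) = 0 := by
      rw [mul_add, mul_one, tauX_idem, tauX_add_self]
    calc tauX = tauX * ((1 + tauX) * t) := by rw [ht, mul_one]
      _ = (tauX * (1 + tauX)) * t := by ring
      _ = 0 := by rw [h1, zero_mul]

end TauAux2

section TauAux3
open Polynomial

lemma tauX_pow (n : ℕ) : tauX ^ (n + 1) = tauX := by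
  induction n with
  | zero => rw [pow_one]
  | succ n ih => rw [pow_succ, ih, tauX_idem]

lemma tau_dvd_prod_primes {R : Type*} [CommRing R] [IsDomain R] :
    ∀ M : Multiset R, (∀ p ∈ M, Prime p) → ∀ b, b ∣ M.prod →
      ∃ t, t ≤ M ∧ Associated b t.prod := by
  classical
  intro M
  induction M using Multiset.induction_on with
  | empty =>
      intro _ b hb
      refine ⟨0, le_rfl, ?_⟩
      simp only [Multiset.prod_zero] at hb ⊢
      exact associated_one_iff_isUnit.mpr (isUnit_of_dvd_one hb)
  | cons p s ih =>
      intro hM b hb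
      have hp : Prime p := hM p (Multiset.mem_cons_self p s)
      rw [Multiset.prod_cons] at hb
      obtain ⟨c, hc⟩ := hb
      have hdvd : p ∣ b * c := ⟨s.prod, by rw [← hc]⟩
      rcases hp.2.2 b c hdvd with hpb | hpc
      · obtain ⟨b', rfl⟩ := hpb
        have hs : s.prod = b' * c := by
          apply mul_left_cancel₀ hp.ne_zero
          rw [hc]; ring
        obtain ⟨t, ht, hass⟩ := ih (fun q hq => hM q (Multiset.mem_cons_of_mem hq)) b' ⟨c, hs⟩
        refine ⟨p ::ₘ t, Multiset.cons_le_cons p ht, ?_⟩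
        rw [Multiset.prod_cons]
        exact (Associated.refl p).mul_mul hass
      · obtain ⟨c', rfl⟩ := hpc
        have hs : s.prod = b * c' := by
          apply mul_left_cancel₀ hp.ne_zero
          rw [hc]; ring
        obtain ⟨t, ht, hass⟩ := ih (fun q hq => hM q (Multiset.mem_cons_of_mem hq)) b ⟨c', hs⟩
        exact ⟨t, le_trans ht (Multiset.le_cons_self s p), hass⟩

lemma tau_countP_rel {R : Type*} [CommMonoid R] {p : R → Prop} [DecidablePred p]
    (hp : ∀ a b : R, Associated a b → (p a ↔ p b)) :
    ∀ {s t : Multiset R}, Multiset.Rel Associated s t →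
      Multiset.countP p s = Multiset.countP p t := by
  intro s t h
  induction h with
  | zero => rfl
  | @cons a b as bs hab hrel ih =>
      rw [Multiset.countP_cons, Multiset.countP_cons, ih]
      congr 1
      exact if_congr (hp a b hab) rfl rfl

lemma tau_list_decomp {R : Type*} [CommRing R] {S : Type*} [CommRing S] (φ : R →+* S) (x1 : S) :
    ∀ L : List R, (∀ b ∈ L, ∃ (v : R) (tp : Multiset R) (q : R), IsUnit v ∧
        (∀ p ∈ tp, Prime p ∧ φ p = 1) ∧ Prime q ∧ φ q = x1 ∧ b = v * (tp.prod * q)) →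
      ∃ (w : R) (Mp Mq : Multiset R), IsUnit w ∧ (∀ p ∈ Mp, Prime p ∧ φ p = 1) ∧
        (∀ q ∈ Mq, Prime q ∧ φ q = x1) ∧ Multiset.card Mq = L.length ∧
        L.prod = w * (Mp.prod * Mq.prod) := by
  intro L
  induction L with
  | nil => exact fun _ => ⟨1, 0, 0, isUnit_one, by simp, by simp, by simp, by simp⟩
  | cons b L ih =>
      intro h
      obtain ⟨v, tp, q, hv, htp, hq, hqx, hb⟩ := h b List.mem_cons_self
      obtain ⟨w, Mp, Mq, hw, hMp, hMq, hcard, hprod⟩ :=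
        ih fun c hc => h c (List.mem_cons_of_mem b hc)
      refine ⟨v * w, tp + Mp, q ::ₘ Mq, hv.mul hw, ?_, ?_, ?_, ?_⟩
      · intro p hp
        rcases Multiset.mem_add.mp hp with h' | h'
        exacts [htp p h', hMp p h']
      · intro r hr
        rcases Multiset.mem_cons.mp hr with rfl | h'
        exacts [⟨hq, hqx⟩, hMq r h']
      · simp [hcard]
      · rw [List.prod_cons, hb, hprod, Multiset.prod_add, Multiset.prod_cons]; ring

end TauAux3

/-- UFD `R`, `R/I ≅ ℤ[x]/(2, x²+x)` via `f`.  If `a ≡ f⁻¹(x) (mod I)` and all prime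
factors of `a` are congruent to `f⁻¹(1)` or `f⁻¹(x)`, with exactly `l` of them
congruent to `f⁻¹(x)`, then every atomic `τ_I`-factorization of `a` has length `l`. -/
theorem stmt_18 {R : Type*} [CommRing R] [IsDomain R] [UniqueFactorizationMonoid R]
    (I : Ideal R)
    (f : (R ⧸ I) ≃+* (ℤ[X] ⧸ Ideal.span ({2, X ^ 2 + X} : Set ℤ[X])))
    (a : R)
    (haI : f (Ideal.Quotient.mk I a) =
      Ideal.Quotient.mk (Ideal.span ({2, X ^ 2 + X} : Set ℤ[X])) X)
    (P Q : List R)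
    (hP : ∀ p ∈ P, Prime p ∧ f (Ideal.Quotient.mk I p) = 1)
    (hQ : ∀ q ∈ Q, Prime q ∧ f (Ideal.Quotient.mk I q) =
      Ideal.Quotient.mk (Ideal.span ({2, X ^ 2 + X} : Set ℤ[X])) X)
    (ha : a = P.prod * Q.prod) :
    ∀ L : List R, IsTauAtomicFactorization I a L → L.length = Q.length := by
  classical
  intro L hL
  obtain ⟨⟨hLne, ⟨u, hu, haL⟩, hcong⟩, hatoms⟩ := hL
  set φ : R →+* tauS := (f : (R ⧸ I) →+* tauS).comp (Ideal.Quotient.mk I) with hφdef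
  have hφ_def : ∀ r : R, φ r = f (Ideal.Quotient.mk I r) := fun r => rfl
  have hφa : φ a = tauX := by rw [hφ_def, haI]; rfl
  have hunit1 : ∀ v : R, IsUnit v → φ v = 1 := fun v hv => tau_units _ (hv.map φ)
  have hinj : ∀ b c : R, φ b = φ c → Ideal.Quotient.mk I b = Ideal.Quotient.mk I c := by
    intro b c h
    rw [hφ_def, hφ_def] at h
    exact f.injective h
  have hinj' : ∀ b c : R, Ideal.Quotient.mk I b = Ideal.Quotient.mk I c → φ b = φ c :=
    fun b c h => by rw [hφ_def, hφ_def, h]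
  -- product computations
  have hprod_one : ∀ tp : Multiset R, (∀ p ∈ tp, φ p = 1) → φ tp.prod = 1 := by
    intro tp h
    rw [map_multiset_prod]
    have : tp.map φ = Multiset.replicate (Multiset.card tp) 1 :=
      Multiset.eq_replicate.mpr ⟨by simp, by
        intro x hx
        obtain ⟨p, hp, rfl⟩ := Multiset.mem_map.mp hx
        exact h p hp⟩
    rw [this, Multiset.prod_replicate, one_pow]
  have hprod_x : ∀ tq : Multiset R, (∀ q ∈ tq, φ q = tauX) →
      φ tq.prod = tauX ^ Multiset.card tq := by
    intro tq h
    rw [map_multiset_prod]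
    have : tq.map φ = Multiset.replicate (Multiset.card tq) tauX :=
      Multiset.eq_replicate.mpr ⟨by simp, by
        intro x hx
        obtain ⟨q, hq, rfl⟩ := Multiset.mem_map.mp hx
        exact h q hq⟩
    rw [this, Multiset.prod_replicate]
  -- the prime multiset of a
  set M : Multiset R := (↑P : Multiset R) + (↑Q : Multiset R) with hMdef
  have hMprime : ∀ p ∈ M, Prime p := by
    intro p hp
    rcases Multiset.mem_add.mp hp with h | h
    · exact (hP p (Multiset.mem_coe.mp h)).1
    · exact (hQ p (Multiset.mem_coe.mp h)).1
  have hMclass : ∀ p ∈ M, φ p = 1 ∨ φ p = tauX := by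
    intro p hp
    rcases Multiset.mem_add.mp hp with h | h
    · left; rw [hφ_def]; exact (hP p (Multiset.mem_coe.mp h)).2
    · right; rw [hφ_def, (hQ p (Multiset.mem_coe.mp h)).2]; rfl
  have haM : a = M.prod := by
    rw [ha, hMdef, Multiset.prod_add, Multiset.prod_coe, Multiset.prod_coe]
  -- decomposition of each factor
  have hdecomp0 : ∀ b ∈ L, ∃ tp tq : Multiset R, (∀ p ∈ tp, Prime p ∧ φ p = 1) ∧
      (∀ q ∈ tq, Prime q ∧ φ q = tauX) ∧ ∃ v, IsUnit v ∧ b = v * (tp.prod * tq.prod) := by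
    intro b hb
    have hbdvd : b ∣ a := (List.dvd_prod hb).trans ⟨u, by rw [haL]; ring⟩
    rw [haM] at hbdvd
    obtain ⟨t, ht, hass⟩ := tau_dvd_prod_primes M hMprime b hbdvd
    have htmem : ∀ z ∈ t, z ∈ M := fun z hz => Multiset.mem_of_le ht hz
    refine ⟨t.filter (fun z => ¬ φ z = tauX), t.filter (fun z => φ z = tauX), ?_, ?_, ?_⟩
    · intro p hp
      have hpt : p ∈ t := Multiset.mem_of_mem_filter hp
      have hnp := Multiset.of_mem_filter hp
      rcases hMclass p (htmem p hpt) with h | h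
      · exact ⟨hMprime p (htmem p hpt), h⟩
      · exact absurd h hnp
    · intro q hq
      exact ⟨hMprime q (htmem q (Multiset.mem_of_mem_filter hq)), (Multiset.of_mem_filter hq : _)⟩
    · obtain ⟨u₀, hu₀⟩ := hass
      refine ⟨(↑u₀⁻¹ : R), Units.isUnit _, ?_⟩
      have hsplit : t.prod =
          (t.filter (fun z => φ z = tauX)).prod * (t.filter (fun z => ¬ φ z = tauX)).prod := by
        conv_lhs => rw [← Multiset.filter_add_not (fun z => φ z = tauX) t]
        rw [Multiset.prod_add]
      calc b = b * (↑u₀ * ↑u₀⁻¹) := by rw [Units.mul_inv, mul_one]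
        _ = (b * ↑u₀) * ↑u₀⁻¹ := by ring
        _ = t.prod * ↑u₀⁻¹ := by rw [hu₀]
        _ = (↑u₀⁻¹ : R) *
            ((t.filter (fun z => ¬ φ z = tauX)).prod * (t.filter (fun z => φ z = tauX)).prod) := by
          rw [hsplit]; ring
  -- each factor has class 1 or x
  have hbval : ∀ b ∈ L, φ b = 1 ∨ φ b = tauX := by
    intro b hb
    obtain ⟨tp, tq, htp, htq, v, hv, hbeq⟩ := hdecomp0 b hb
    have h1 : φ tp.prod = 1 := hprod_one tp fun p hp => (htp p hp).2
    have h2 : φ tq.prod = tauX ^ Multiset.card tq := hprod_x tq fun q hq => (htq q hq).2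
    rw [hbeq, map_mul, map_mul, hunit1 v hv, one_mul, h1, one_mul, h2]
    rcases Nat.eq_zero_or_pos (Multiset.card tq) with h | h
    · left; rw [h, pow_zero]
    · right
      obtain ⟨m, hm⟩ := Nat.exists_eq_succ_of_ne_zero (Nat.pos_iff_ne_zero.mp h)
      rw [hm, tauX_pow]
  -- all factors have class x
  have hsame : ∀ b ∈ L, φ b = tauX := by
    obtain ⟨b₀, hb₀⟩ := List.exists_mem_of_ne_nil L hLne
    have hall : ∀ b ∈ L, φ b = φ b₀ := fun b hb => hinj' b b₀ (hcong b hb b₀ hb₀)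
    have hprodL : φ L.prod = (φ b₀) ^ L.length := by
      rw [map_list_prod]
      have := List.prod_eq_pow_card (L.map φ) (φ b₀) (by
        intro x hx
        obtain ⟨b, hb, rfl⟩ := List.mem_map.mp hx
        exact hall b hb)
      rwa [List.length_map] at this
    have hφa' : tauX = φ u * φ L.prod := by rw [← map_mul, ← haL, hφa]
    rw [hunit1 u hu, one_mul, hprodL] at hφa'
    rcases hbval b₀ hb₀ with h | h
    · rw [h, one_pow] at hφa'
      exact absurd hφa' tauX_ne_one
    · intro b hb
      rw [hall b hb, h]
  -- key: each atom has exactly one x-class prime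
  have hkey : ∀ b ∈ L, ∃ (v : R) (tp : Multiset R) (q : R), IsUnit v ∧
      (∀ p ∈ tp, Prime p ∧ φ p = 1) ∧ Prime q ∧ φ q = tauX ∧ b = v * (tp.prod * q) := by
    intro b hb
    obtain ⟨tp, tq, htp, htq, v, hv, hbeq⟩ := hdecomp0 b hb
    have h1 : φ tp.prod = 1 := hprod_one tp fun p hp => (htp p hp).2
    have hcard0 : Multiset.card tq ≠ 0 := by
      intro h0
      have htq0 : tq = 0 := Multiset.card_eq_zero.mp h0
      have hb1 : φ b = 1 := by
        rw [hbeq, htq0, map_mul, map_mul, hunit1 v hv, h1]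
        simp
      rw [hsame b hb] at hb1
      exact tauX_ne_one hb1
    have hle : Multiset.card tq ≤ 1 := by
      by_contra hgt
      push_neg at hgt
      obtain ⟨q₁, hq₁⟩ := (Multiset.card_pos_iff_exists_mem (s := tq)).mp (by omega)
      have htq'card : Multiset.card (tq.erase q₁) = Multiset.card tq - 1 :=
        Multiset.card_erase_of_mem hq₁
      have hconsq : q₁ ::ₘ tq.erase q₁ = tq := Multiset.cons_erase hq₁
      set L' : List R := (v * (tp.prod * q₁)) :: (tq.erase q₁).toList with hL'
      have hfac : IsTauFactorization I b L' := by
        refine ⟨by simp [hL'], ⟨1, isUnit_one, ?_⟩, ?_⟩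
        · have htqsplit : tq.prod = q₁ * (tq.erase q₁).prod := by
            conv_lhs => rw [← hconsq]
            rw [Multiset.prod_cons]
          rw [one_mul, hL', List.prod_cons, Multiset.prod_toList, hbeq, htqsplit]
          ring
        · have hclassL' : ∀ e ∈ L', φ e = tauX := by
            intro e he
            rcases List.mem_cons.mp he with rfl | he'
            · rw [map_mul, map_mul, hunit1 v hv, one_mul, h1, one_mul]
              exact (htq q₁ hq₁).2
            · have he2 : e ∈ tq.erase q₁ := Multiset.mem_toList.mp he'
              exact (htq e (Multiset.mem_of_mem_erase he2)).2
          intro b1 hb1 c1 hc1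
          exact hinj _ _ (by rw [hclassL' b1 hb1, hclassL' c1 hc1])
      have hlen := (hatoms b hb).2.2 L' hfac
      rw [hL'] at hlen
      simp only [List.length_cons, Multiset.length_toList, htq'card] at hlen
      omega
    have hone : Multiset.card tq = 1 := le_antisymm hle (Nat.one_le_iff_ne_zero.mpr hcard0)
    obtain ⟨q, rfl⟩ := Multiset.card_eq_one.mp hone
    refine ⟨v, tp, q, hv, htp, (htq q (Multiset.mem_singleton_self q)).1,
      (htq q (Multiset.mem_singleton_self q)).2, ?_⟩
    rw [hbeq, Multiset.prod_singleton]
  -- combine all the atom decompositions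
  obtain ⟨w, Mp, Mq, hw, hMp', hMq', hcard, hprodw⟩ := tau_list_decomp φ tauX L hkey
  have haMP : a = (u * w) * (Mp + Mq).prod := by
    rw [haL, hprodw, Multiset.prod_add]; ring
  have huw : IsUnit (u * w) := hu.mul hw
  have hassoc : Associated M.prod (Mp + Mq).prod := by
    refine ⟨huw.unit⁻¹, ?_⟩
    have hspec : ((huw.unit : Rˣ) : R) = u * w := huw.unit_spec
    calc M.prod * ↑huw.unit⁻¹ = ((u * w) * (Mp + Mq).prod) * ↑huw.unit⁻¹ := by rw [← haMP, haM]
      _ = (Mp + Mq).prod * (((huw.unit : Rˣ) : R) * ↑huw.unit⁻¹) := by rw [hspec]; ring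
      _ = (Mp + Mq).prod := by rw [Units.mul_inv, mul_one]
  have hMPprime : ∀ p ∈ Mp + Mq, Prime p := by
    intro p hp
    rcases Multiset.mem_add.mp hp with h | h
    exacts [(hMp' p h).1, (hMq' p h).1]
  have hrel := prime_factors_unique hMprime hMPprime hassoc
  have hpredinv : ∀ x y : R, Associated x y → ((φ x = tauX) ↔ (φ y = tauX)) := by
    intro x y hxy
    obtain ⟨u₁, rfl⟩ := hxy
    rw [map_mul, hunit1 _ u₁.isUnit, mul_one]
  have hcount := tau_countP_rel hpredinv hrel
  have hone_ne : (1 : tauS) ≠ tauX := fun h => tauX_ne_one h.symm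
  have hMcount : Multiset.countP (fun z => φ z = tauX) M = Q.length := by
    rw [hMdef, Multiset.countP_add]
    have h1 : Multiset.countP (fun z => φ z = tauX) (↑P : Multiset R) = 0 :=
      Multiset.countP_eq_zero.mpr (by
        intro z hz h
        rw [hφ_def, (hP z (Multiset.mem_coe.mp hz)).2] at h
        exact hone_ne h)
    have h2 : Multiset.countP (fun z => φ z = tauX) (↑Q : Multiset R) =
        Multiset.card (↑Q : Multiset R) :=
      Multiset.countP_eq_card.mpr (by
        intro z hz
        rw [hφ_def, (hQ z (Multiset.mem_coe.mp hz)).2]; rfl)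
    rw [h1, h2, Multiset.coe_card, zero_add]
  have hMPcount : Multiset.countP (fun z => φ z = tauX) (Mp + Mq) = L.length := by
    rw [Multiset.countP_add]
    have h1 : Multiset.countP (fun z => φ z = tauX) Mp = 0 :=
      Multiset.countP_eq_zero.mpr (by
        intro z hz h
        rw [(hMp' z hz).2] at h
        exact hone_ne h)
    have h2 : Multiset.countP (fun z => φ z = tauX) Mq = Multiset.card Mq :=
      Multiset.countP_eq_card.mpr fun z hz => (hMq' z hz).2
    rw [h1, h2, hcard, zero_add]
  rw [← hMPcount, ← hcount, hMcount]
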